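/- Let P be a lattice polygon that is a strictly convex octagon with vertices v_1,...,v_8 ∈ ℤ² such that the only lattice points on the boundary of P are the 8 vertices, and suppose v_1 = (0,1), v_2 = (0,0), v_3 = (1,0). If the internal angle at v_2 between the edges v_1v_2 and v_2v_3 is π/2 and the internal angles at v_1 and at v_3 are each strictly greater than π/2, then (1,1) is an interior point of P. -/

import Mathlib

open EuclideanGeometry

noncomputable def cross4 (x y : EuclideanSpace ℝ (Fin 2)) : ℝ := x 0 * y 1 - x 1 * y 0

def IsLatticePoint4 (x : EuclideanSpace ℝ (Fin 2)) : Prop :=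
  ∃ p : ℤ × ℤ, x = ![(p.1 : ℝ), (p.2 : ℝ)]

lemma cross4_cont (a b : EuclideanSpace ℝ (Fin 2)) :
    Continuous fun u : EuclideanSpace ℝ (Fin 2) => cross4 a (u - b) := by
  show Continuous fun u : EuclideanSpace ℝ (Fin 2) =>
    a 0 * ((EuclideanSpace.proj (1 : Fin 2)) u - b 1) -
      a 1 * ((EuclideanSpace.proj (0 : Fin 2)) u - b 0)
  fun_prop

lemma tri_interior (p q r w : EuclideanSpace ℝ (Fin 2)) (s : Set (EuclideanSpace ℝ (Fin 2)))
    (hp : p ∈ s) (hq : q ∈ s) (hr : r ∈ s)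
    (h1 : 0 < cross4 (q - p) (w - p)) (h2 : 0 < cross4 (r - q) (w - q))
    (h3 : 0 < cross4 (p - r) (w - r)) :
    w ∈ interior (convexHull ℝ s) := by
  set U : Set (EuclideanSpace ℝ (Fin 2)) :=
    {u | 0 < cross4 (q - p) (u - p)} ∩
      ({u | 0 < cross4 (r - q) (u - q)} ∩ {u | 0 < cross4 (p - r) (u - r)}) with hU
  have hUopen : IsOpen U :=
    ((isOpen_lt continuous_const (cross4_cont _ _)).inter
      ((isOpen_lt continuous_const (cross4_cont _ _)).inter
        (isOpen_lt continuous_const (cross4_cont _ _))))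
  have hsub : U ⊆ convexHull ℝ s := by
    rintro u ⟨c1, c2, c3⟩
    simp only [Set.mem_setOf_eq] at c1 c2 c3
    set T := cross4 (q - p) (r - p) with hTdef
    have hT : cross4 (q - p) (u - p) + cross4 (r - q) (u - q) + cross4 (p - r) (u - r) = T := by
      show (q 0 - p 0) * (u 1 - p 1) - (q 1 - p 1) * (u 0 - p 0)
          + ((r 0 - q 0) * (u 1 - q 1) - (r 1 - q 1) * (u 0 - q 0))
          + ((p 0 - r 0) * (u 1 - r 1) - (p 1 - r 1) * (u 0 - r 0))
          = (q 0 - p 0) * (r 1 - p 1) - (q 1 - p 1) * (r 0 - p 0)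
      ring
    have hTpos : 0 < T := by linarith
    have hTne : T ≠ 0 := ne_of_gt hTpos
    set a := cross4 (r - q) (u - q) / T with ha
    set b := cross4 (p - r) (u - r) / T with hb
    set c := cross4 (q - p) (u - p) / T with hc
    have hapos : 0 < a := div_pos c2 hTpos
    have hbpos : 0 < b := div_pos c3 hTpos
    have hcpos : 0 < c := div_pos c1 hTpos
    have hsum : a + b + c = 1 := by
      rw [ha, hb, hc, ← add_div, ← add_div, ← hT]
      field_simp
      ring
    have key : ∀ i : Fin 2, u i * T =
        cross4 (r - q) (u - q) * p i + cross4 (p - r) (u - r) * q i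
          + cross4 (q - p) (u - p) * r i := by
      have k0 : u 0 * T =
          cross4 (r - q) (u - q) * p 0 + cross4 (p - r) (u - r) * q 0
            + cross4 (q - p) (u - p) * r 0 := by
        show u 0 * ((q 0 - p 0) * (r 1 - p 1) - (q 1 - p 1) * (r 0 - p 0)) =
          ((r 0 - q 0) * (u 1 - q 1) - (r 1 - q 1) * (u 0 - q 0)) * p 0
            + ((p 0 - r 0) * (u 1 - r 1) - (p 1 - r 1) * (u 0 - r 0)) * q 0
            + ((q 0 - p 0) * (u 1 - p 1) - (q 1 - p 1) * (u 0 - p 0)) * r 0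
        ring
      have k1 : u 1 * T =
          cross4 (r - q) (u - q) * p 1 + cross4 (p - r) (u - r) * q 1
            + cross4 (q - p) (u - p) * r 1 := by
        show u 1 * ((q 0 - p 0) * (r 1 - p 1) - (q 1 - p 1) * (r 0 - p 0)) =
          ((r 0 - q 0) * (u 1 - q 1) - (r 1 - q 1) * (u 0 - q 0)) * p 1
            + ((p 0 - r 0) * (u 1 - r 1) - (p 1 - r 1) * (u 0 - r 0)) * q 1
            + ((q 0 - p 0) * (u 1 - p 1) - (q 1 - p 1) * (u 0 - p 0)) * r 1
        ring
      intro i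
      fin_cases i
      · exact k0
      · exact k1
    have hcoord : ∀ i : Fin 2, u i = a * p i + b * q i + c * r i := by
      intro i
      rw [ha, hb, hc, div_mul_eq_mul_div, div_mul_eq_mul_div, div_mul_eq_mul_div,
        ← add_div, ← add_div, eq_div_iff hTne]
      exact key i
    have hu : u = a • p + b • q + c • r := by
      ext i
      exact hcoord i
    rw [hu]
    have hbc : 0 < b + c := by linarith
    have hbcne : b + c ≠ 0 := ne_of_gt hbc
    have hz : (b / (b + c)) • q + (c / (b + c)) • r ∈ convexHull ℝ s :=
      (convex_convexHull ℝ s) (subset_convexHull ℝ s hq) (subset_convexHull ℝ s hr)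
        (le_of_lt (div_pos hbpos hbc)) (le_of_lt (div_pos hcpos hbc))
        (by field_simp)
    have e1 : (b + c) * (b / (b + c)) = b := by field_simp
    have e2 : (b + c) * (c / (b + c)) = c := by field_simp
    have hcomb : a • p + b • q + c • r
        = a • p + (b + c) • ((b / (b + c)) • q + (c / (b + c)) • r) := by
      rw [smul_add, smul_smul, smul_smul, e1, e2, add_assoc]
    rw [hcomb]
    exact (convex_convexHull ℝ s) (subset_convexHull ℝ s hp) hz
      (le_of_lt hapos) (le_of_lt hbc) (by linarith)
  exact interior_maximal hsub hUopen ⟨h1, h2, h3⟩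

lemma vsub2 (x0 x1 y0 y1 : ℝ) :
    (!₂[x0, x1] : EuclideanSpace ℝ (Fin 2)) - !₂[y0, y1] = !₂[x0 - y0, x1 - y1] := by
  ext i; fin_cases i <;> rfl

lemma cross4_eval (x0 x1 y0 y1 : ℝ) :
    cross4 (!₂[x0, x1] : EuclideanSpace ℝ (Fin 2)) !₂[y0, y1] = x0 * y1 - x1 * y0 := rfl

lemma inner_eval (x y : EuclideanSpace ℝ (Fin 2)) :
    (inner ℝ x y : ℝ) = x 0 * y 0 + x 1 * y 1 := by
  simp only [PiLp.inner_apply, Fin.sum_univ_two, Real.inner_apply, RCLike.inner_apply, conj_trivial]; ring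

lemma inner_neg_of_angle_gt {x y : EuclideanSpace ℝ (Fin 2)}
    (h : Real.pi / 2 < InnerProductGeometry.angle x y) : (inner ℝ x y : ℝ) < 0 := by
  have hcos : Real.cos (InnerProductGeometry.angle x y) < Real.cos (Real.pi / 2) :=
    Real.cos_lt_cos_of_nonneg_of_le_pi (by positivity) (InnerProductGeometry.angle_le_pi x y) h
  rw [Real.cos_pi_div_two, InnerProductGeometry.cos_angle] at hcos
  rcases div_neg_iff.mp hcos with ⟨_, h2⟩ | ⟨h1, _⟩
  · exact absurd h2 (not_lt.mpr (mul_nonneg (norm_nonneg x) (norm_nonneg y)))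
  · exact h1

set_option maxHeartbeats 1600000

/-- If `P` is a strictly convex lattice octagon whose only boundary lattice
points are its 8 vertices, with `v 0 = (0,1)`, `v 1 = (0,0)`, `v 2 = (1,0)`, the internal
angle at `v 1` equal to `π/2`, and the internal angles at `v 0` and `v 2` strictly greater
than `π/2`, then `(1,1)` is an interior point of `P`. -/
theorem lattice_octagon_interior_point
    (v : ZMod 8 → EuclideanSpace ℝ (Fin 2))
    (hlat : ∀ i, IsLatticePoint4 (v i))
    (hne : ∀ i, v (i + 1) - v i ≠ 0)
    (hconv : ∀ i, 0 < cross4 (v (i + 1) - v i) (v (i + 2) - v (i + 1)))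
    (hstrict : ∀ i, v i ∉ convexHull ℝ (v '' {j | j ≠ i}))
    (hbd : ∀ (p : ℤ × ℤ) (i : ZMod 8),
      (!₂[(p.1 : ℝ), (p.2 : ℝ)] : EuclideanSpace ℝ (Fin 2)) ∈ segment ℝ (v i) (v (i + 1)) →
        ∃ j : ZMod 8, (!₂[(p.1 : ℝ), (p.2 : ℝ)] : EuclideanSpace ℝ (Fin 2)) = v j)
    (h0 : v 0 = ![(0 : ℝ), 1]) (h1 : v 1 = ![(0 : ℝ), 0]) (h2 : v 2 = ![(1 : ℝ), 0])
    (hang1 : ∠ (v 0) (v 1) (v 2) = Real.pi / 2)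
    (hang0 : Real.pi / 2 < ∠ (v 7) (v 0) (v 1))
    (hang2 : Real.pi / 2 < ∠ (v 1) (v 2) (v 3)) :
    (!₂[(1 : ℝ), 1] : EuclideanSpace ℝ (Fin 2))
      ∈ interior (convexHull ℝ (Set.range v)) := by
  obtain ⟨m, hv3⟩ := hlat 3
  obtain ⟨n, hv7⟩ := hlat 7
  replace h0 : v 0 = !₂[(0 : ℝ), 1] := by ext i; fin_cases i <;> simp [h0]
  replace h1 : v 1 = !₂[(0 : ℝ), 0] := by ext i; fin_cases i <;> simp [h1]
  replace h2 : v 2 = !₂[(1 : ℝ), 0] := by ext i; fin_cases i <;> simp [h2]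
  replace hv3 : v 3 = !₂[(m.1 : ℝ), (m.2 : ℝ)] := by ext i; fin_cases i <;> simp [hv3]
  replace hv7 : v 7 = !₂[(n.1 : ℝ), (n.2 : ℝ)] := by ext i; fin_cases i <;> simp [hv7]
  have hB1 : (1 : ℤ) ≤ m.2 := by
    have h := hconv 1
    rw [show ((1 : ZMod 8) + 1) = 2 from rfl, show ((1 : ZMod 8) + 2) = 3 from rfl,
      h1, h2, hv3, vsub2, vsub2, cross4_eval] at h
    have : (0 : ℝ) < (m.2 : ℝ) := by nlinarith [h]
    exact_mod_cast this
  have hC1 : (1 : ℤ) ≤ n.1 := by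
    have h := hconv 7
    rw [show ((7 : ZMod 8) + 1) = 0 from rfl, show ((7 : ZMod 8) + 2) = 1 from rfl,
      h0, h1, hv7, vsub2, vsub2, cross4_eval] at h
    have : (0 : ℝ) < (n.1 : ℝ) := by nlinarith [h]
    exact_mod_cast this
  have hA2 : (2 : ℤ) ≤ m.1 := by
    have h : (inner ℝ (v 1 - v 2) (v 3 - v 2) : ℝ) < 0 := inner_neg_of_angle_gt hang2
    rw [inner_eval, h1, h2, hv3] at h
    rw [vsub2, vsub2] at h
    simp only [PiLp.toLp_apply, Matrix.cons_val_zero, Matrix.cons_val_one, Matrix.head_cons] at h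
    have : (1 : ℝ) < (m.1 : ℝ) := by nlinarith [h]
    have : (1 : ℤ) < m.1 := by exact_mod_cast this
    omega
  have hD2 : (2 : ℤ) ≤ n.2 := by
    have h : (inner ℝ (v 7 - v 0) (v 1 - v 0) : ℝ) < 0 := inner_neg_of_angle_gt hang0
    rw [inner_eval, h0, h1, hv7] at h
    rw [vsub2, vsub2] at h
    simp only [PiLp.toLp_apply, Matrix.cons_val_zero, Matrix.cons_val_one, Matrix.head_cons] at h
    have : (1 : ℝ) < (n.2 : ℝ) := by nlinarith [h]
    have : (1 : ℤ) < n.2 := by exact_mod_cast this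
    omega
  have rA : (2 : ℝ) ≤ (m.1 : ℝ) := by exact_mod_cast hA2
  have rB : (1 : ℝ) ≤ (m.2 : ℝ) := by exact_mod_cast hB1
  have rC : (1 : ℝ) ≤ (n.1 : ℝ) := by exact_mod_cast hC1
  have rD : (2 : ℝ) ≤ (n.2 : ℝ) := by exact_mod_cast hD2
  rcases le_or_gt 2 m.2 with hb2 | hb1
  · -- triangle v2 v3 v0
    have rB2 : (2 : ℝ) ≤ (m.2 : ℝ) := by exact_mod_cast hb2
    refine tri_interior (v 2) (v 3) (v 0) _ _ ⟨2, rfl⟩ ⟨3, rfl⟩ ⟨0, rfl⟩ ?_ ?_ ?_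
    · rw [hv3, h2, vsub2, vsub2, cross4_eval]; nlinarith
    · rw [hv3, h0, vsub2, vsub2, cross4_eval]; nlinarith
    · rw [h0, h2, vsub2, vsub2, cross4_eval]; norm_num
  · have hb1' : m.2 = 1 := by omega
    have rB1 : (m.2 : ℝ) = 1 := by exact_mod_cast hb1'
    rcases le_or_gt 2 n.1 with hc2 | hc1
    · -- triangle v2 v7 v0
      have rC2 : (2 : ℝ) ≤ (n.1 : ℝ) := by exact_mod_cast hc2
      refine tri_interior (v 2) (v 7) (v 0) _ _ ⟨2, rfl⟩ ⟨7, rfl⟩ ⟨0, rfl⟩ ?_ ?_ ?_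
      · rw [hv7, h2, vsub2, vsub2, cross4_eval]; nlinarith
      · rw [hv7, h0, vsub2, vsub2, cross4_eval]; nlinarith
      · rw [h0, h2, vsub2, vsub2, cross4_eval]; norm_num
    · have hc1' : n.1 = 1 := by omega
      have rC1 : (n.1 : ℝ) = 1 := by exact_mod_cast hc1'
      -- triangle v1 v3 v7
      refine tri_interior (v 1) (v 3) (v 7) _ _ ⟨1, rfl⟩ ⟨3, rfl⟩ ⟨7, rfl⟩ ?_ ?_ ?_
      · rw [hv3, h1, vsub2, vsub2, cross4_eval]; nlinarith
      · rw [hv3, hv7, vsub2, vsub2, cross4_eval]; nlinarith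
      · rw [hv7, h1, vsub2, vsub2, cross4_eval]; nlinarith
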